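/- Let M be a k×n matrix and let r, ℓ ≥ 2 with r ≤ k. Suppose M has at least (n/k)^k nonsingular k×k submatrices, and suppose (e²ℓ)^k < (n/r)^{k−r}. Then the columns of M can be partitioned so as to contain ℓ pairwise disjoint sets of columns, each of which spans a subspace of dimension at least r (an (r,ℓ)-rank partition). -/

import Mathlib

open Matrix


private lemma pow_self_le_exp_mul_factorial (k : ℕ) :
    (k : ℝ) ^ k ≤ Real.exp 1 ^ k * k.factorial := by
  induction k with
  | zero => simp
  | succ k ih =>
    have he : (0:ℝ) < Real.exp 1 := Real.exp_pos 1
    have hstep : ((k:ℝ)+1) ^ k ≤ Real.exp 1 * (k : ℝ) ^ k := by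
      rcases Nat.eq_zero_or_pos k with hk | hk
      · subst hk; simpa using Real.one_le_exp (le_refl 0) |>.trans (le_refl _) |>.trans_eq rfl
      · have hk0 : (0:ℝ) < (k:ℝ) := by exact_mod_cast hk
        have h1 : ((k:ℝ)+1) = (k:ℝ) * (1 + 1/(k:ℝ)) := by field_simp
        have h2 : (1 + 1/(k:ℝ)) ^ k ≤ Real.exp 1 := by
          have h3 := Real.add_one_le_exp (1/(k:ℝ))
          calc (1 + 1/(k:ℝ))^k ≤ (Real.exp (1/(k:ℝ)))^k := by
                apply pow_le_pow_left₀ (by positivity) (by linarith)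
            _ = Real.exp ((k:ℝ) * (1/(k:ℝ))) := by rw [← Real.exp_nat_mul]
            _ = Real.exp 1 := by congr 1; field_simp
        calc ((k:ℝ)+1)^k = (k:ℝ)^k * (1+1/(k:ℝ))^k := by rw [h1, mul_pow]
          _ ≤ (k:ℝ)^k * Real.exp 1 := by
              apply mul_le_mul_of_nonneg_left h2 (by positivity)
          _ = Real.exp 1 * (k:ℝ)^k := mul_comm _ _
    have hk1 : (0:ℝ) ≤ (k:ℝ)+1 := by positivity
    calc ((k+1:ℕ):ℝ)^(k+1) = ((k:ℝ)+1) * ((k:ℝ)+1)^k := by push_cast; ring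
      _ ≤ ((k:ℝ)+1) * (Real.exp 1 * (k:ℝ)^k) := by
          exact mul_le_mul_of_nonneg_left hstep hk1
      _ ≤ ((k:ℝ)+1) * (Real.exp 1 * (Real.exp 1 ^ k * k.factorial)) := by
          apply mul_le_mul_of_nonneg_left _ hk1
          exact mul_le_mul_of_nonneg_left ih (le_of_lt he)
      _ = Real.exp 1 ^ (k+1) * ((k+1).factorial) := by
          push_cast [Nat.factorial_succ]; ring



private lemma key_ineq (k n r ℓ : ℕ) (hr2 : 2 ≤ r) (hℓ2 : 2 ≤ ℓ) (hrk : r < k)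
    (hcond : ((Real.exp 1) ^ 2 * ℓ) ^ k < ((n : ℝ) / r) ^ (k - r))
    (hbound : ((n : ℝ) / k) ^ k ≤ ((ℓ*r).choose (k - r + 1) : ℝ) * (n.choose (r-1) : ℝ)) :
    False := by
  set e := Real.exp 1 with hedef
  have h2e : (2:ℝ) ≤ e := by nlinarith [Real.add_one_le_exp (1:ℝ)]
  have he0 : (0:ℝ) < e := by linarith
  have he1 : (1:ℝ) ≤ e := by linarith
  set d := k - r with hddef
  have hk : k = r + d := by omega
  have hd1 : 1 ≤ d := by omega
  have hr0 : (0:ℝ) < (r:ℝ) := by exact_mod_cast (by omega : 0 < r)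
  have hℓ1 : (1:ℝ) ≤ (ℓ:ℝ) := by exact_mod_cast (by omega : 1 ≤ ℓ)
  have hℓ0 : (0:ℝ) < (ℓ:ℝ) := by linarith
  have hk0 : (0:ℝ) < (k:ℝ) := by exact_mod_cast (by omega : 0 < k)
  have hpos : (0:ℝ) < ((n:ℝ)/r)^d := lt_of_le_of_lt (by positivity) hcond
  have hn0 : (0:ℝ) < (n:ℝ) := by
    rcases Nat.eq_zero_or_pos n with h | h
    · exfalso; rw [h] at hpos
      rw [Nat.cast_zero, zero_div, zero_pow (by omega : d ≠ 0)] at hpos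
      exact lt_irrefl 0 hpos
    · exact_mod_cast h
  set F : ℝ := ((d+1).factorial : ℝ) * ((r-1).factorial : ℝ) with hFdef
  have hF0 : (0:ℝ) < F := by positivity
  -- (B)
  have hB : (e^2*ℓ)^k * (r:ℝ)^d < (n:ℝ)^d := by
    have hmul : ((n:ℝ)/r)^d * (r:ℝ)^d = (n:ℝ)^d := by
      rw [← mul_pow, div_mul_cancel₀]; exact ne_of_gt hr0
    calc (e^2*ℓ)^k * (r:ℝ)^d < ((n:ℝ)/r)^d * (r:ℝ)^d := by
          apply mul_lt_mul_of_pos_right hcond (by positivity)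
      _ = (n:ℝ)^d := hmul
  -- choose * factorial bounds
  have hC1 : ((ℓ*r).choose (d+1) : ℝ) * ((d+1).factorial:ℝ) ≤ ((ℓ:ℝ)*(r:ℝ))^(d+1) := by
    have h := Nat.choose_le_pow_div (α := ℝ) (d+1) (ℓ*r)
    rw [le_div_iff₀ (by positivity)] at h
    calc ((ℓ*r).choose (d+1) : ℝ) * ((d+1).factorial:ℝ) ≤ (((ℓ*r : ℕ)) ^ (d+1) : ℝ) := h
      _ = ((ℓ:ℝ)*(r:ℝ))^(d+1) := by push_cast; ring
  have hC2 : (n.choose (r-1) : ℝ) * ((r-1).factorial:ℝ) ≤ (n:ℝ)^(r-1) := by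
    have h := Nat.choose_le_pow_div (α := ℝ) (r-1) n
    rw [le_div_iff₀ (by positivity)] at h
    calc (n.choose (r-1) : ℝ) * ((r-1).factorial:ℝ) ≤ (((n : ℕ)) ^ (r-1) : ℝ) := h
      _ = (n:ℝ)^(r-1) := by push_cast; ring
  -- (A)
  have hA : (n:ℝ)^(d+1) * F ≤ (k:ℝ)^k * ((ℓ:ℝ)*(r:ℝ))^(d+1) := by
    have hnk : (n:ℝ)^k ≤ (k:ℝ)^k * (((ℓ*r).choose (d+1):ℝ) * (n.choose (r-1):ℝ)) := by
      have hsplit : (n:ℝ)^k = ((n:ℝ)/k)^k * (k:ℝ)^k := by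
        rw [div_pow, div_mul_cancel₀]; positivity
      rw [hsplit]
      calc ((n:ℝ)/k)^k * (k:ℝ)^k
          ≤ (((ℓ*r).choose (d+1):ℝ) * (n.choose (r-1):ℝ)) * (k:ℝ)^k := by
            apply mul_le_mul_of_nonneg_right hbound (by positivity)
        _ = (k:ℝ)^k * (((ℓ*r).choose (d+1):ℝ) * (n.choose (r-1):ℝ)) := by ring
    have hmain : ((n:ℝ)^(d+1) * F) * (n:ℝ)^(r-1) ≤ ((k:ℝ)^k * ((ℓ:ℝ)*(r:ℝ))^(d+1)) * (n:ℝ)^(r-1) := by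
      have hnk' : (n:ℝ)^(d+1) * (n:ℝ)^(r-1) = (n:ℝ)^k := by
        rw [← pow_add]; congr 1; omega
      calc ((n:ℝ)^(d+1) * F) * (n:ℝ)^(r-1)
          = (n:ℝ)^k * F := by rw [← hnk']; ring
        _ ≤ ((k:ℝ)^k * (((ℓ*r).choose (d+1):ℝ) * (n.choose (r-1):ℝ))) * F := by
            apply mul_le_mul_of_nonneg_right hnk (le_of_lt hF0)
        _ = (k:ℝ)^k * ((((ℓ*r).choose (d+1):ℝ) * ((d+1).factorial:ℝ)) * ((n.choose (r-1):ℝ) * ((r-1).factorial:ℝ))) := by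
            rw [hFdef]; ring
        _ ≤ (k:ℝ)^k * (((ℓ:ℝ)*(r:ℝ))^(d+1) * (n:ℝ)^(r-1)) := by
            apply mul_le_mul_of_nonneg_left _ (by positivity)
            apply mul_le_mul hC1 hC2 (by positivity) (by positivity)
        _ = ((k:ℝ)^k * ((ℓ:ℝ)*(r:ℝ))^(d+1)) * (n:ℝ)^(r-1) := by ring
    exact le_of_mul_le_mul_right hmain (by positivity)
  -- (C)
  have hC : (k:ℝ)^k ≤ e^k * 2^k * F := by
    have hfac : (k.factorial : ℝ) = (k.choose (d+1) : ℝ) * F := by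
      have h := Nat.choose_mul_factorial_mul_factorial (show d+1 ≤ k by omega)
      have hsub : k - (d+1) = r - 1 := by omega
      rw [hsub] at h
      rw [hFdef, ← h]; push_cast; ring
    have hch : (k.choose (d+1) : ℝ) ≤ 2^k := by
      have h : k.choose (d+1) ≤ 2^k := by
        calc k.choose (d+1) ≤ ∑ m ∈ Finset.range (k+1), k.choose m :=
              Finset.single_le_sum (f := fun m => k.choose m) (fun _ _ => Nat.zero_le _)
                (Finset.mem_range.mpr (by omega))
          _ = 2^k := Nat.sum_range_choose k
      calc (k.choose (d+1) : ℝ) ≤ ((2^k : ℕ) : ℝ) := by exact_mod_cast h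
        _ = 2^k := by push_cast; ring
    calc (k:ℝ)^k ≤ e^k * k.factorial := pow_self_le_exp_mul_factorial k
      _ = e^k * ((k.choose (d+1):ℝ) * F) := by rw [hfac]
      _ ≤ e^k * (2^k * F) := by
          apply mul_le_mul_of_nonneg_left _ (by positivity)
          apply mul_le_mul_of_nonneg_right hch (le_of_lt hF0)
      _ = e^k * 2^k * F := by ring
  -- combine
  have h1 : ((n:ℝ)^(d+1) * F)^d ≤ ((k:ℝ)^k * ((ℓ:ℝ)*(r:ℝ))^(d+1))^d :=
    pow_le_pow_left₀ (by positivity) hA d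
  have h2 : ((e^2*(ℓ:ℝ))^k * (r:ℝ)^d)^(d+1) < ((n:ℝ)^d)^(d+1) :=
    pow_lt_pow_left₀ hB (by positivity) (by omega)
  have hstar : ((e^2*(ℓ:ℝ))^k * (r:ℝ)^d)^(d+1) * F^d < ((k:ℝ)^k * ((ℓ:ℝ)*(r:ℝ))^(d+1))^d := by
    calc ((e^2*(ℓ:ℝ))^k * (r:ℝ)^d)^(d+1) * F^d < ((n:ℝ)^d)^(d+1) * F^d := by
          apply mul_lt_mul_of_pos_right h2 (by positivity)
      _ = ((n:ℝ)^(d+1) * F)^d := by rw [hFdef]; ring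
      _ ≤ _ := h1
  have hcounter : ((k:ℝ)^k * ((ℓ:ℝ)*(r:ℝ))^(d+1))^d ≤ ((e^2*(ℓ:ℝ))^k * (r:ℝ)^d)^(d+1) * F^d := by
    have lhs_eq : ((k:ℝ)^k * ((ℓ:ℝ)*(r:ℝ))^(d+1))^d
        = ((k:ℝ)^k)^d * (ℓ:ℝ)^((d+1)*d) * (r:ℝ)^((d+1)*d) := by
      ring
    have rhs_eq : ((e^2*(ℓ:ℝ))^k * (r:ℝ)^d)^(d+1) * F^d
        = e^(2*(k*(d+1))) * (ℓ:ℝ)^(k*(d+1)) * (r:ℝ)^(d*(d+1)) * F^d := by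
      ring
    rw [lhs_eq, rhs_eq]
    have step1 : ((k:ℝ)^k)^d ≤ (e^k * 2^k * F)^d := pow_le_pow_left₀ (by positivity) hC d
    have step2 : (e^k * 2^k * F)^d = e^(k*d) * 2^(k*d) * F^d := by
      ring
    have step3 : (2:ℝ)^(k*d) ≤ e^(k*d) := pow_le_pow_left₀ (by norm_num) h2e _
    have step4 : e^(k*d) * e^(k*d) ≤ e^(2*(k*(d+1))) := by
      rw [← pow_add]
      apply pow_le_pow_right₀ he1
      calc k*d + k*d = 2*(k*d) := by ring
        _ ≤ 2*(k*(d+1)) := Nat.mul_le_mul_left 2 (Nat.mul_le_mul_left k (show d ≤ d+1 by omega))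
    have step5 : (ℓ:ℝ)^((d+1)*d) ≤ (ℓ:ℝ)^(k*(d+1)) := by
      apply pow_le_pow_right₀ hℓ1
      rw [Nat.mul_comm k (d+1), Nat.mul_comm (d+1) d, Nat.mul_comm d (d+1)]
      exact Nat.mul_le_mul_left (d+1) (show d ≤ k by omega)
    calc ((k:ℝ)^k)^d * (ℓ:ℝ)^((d+1)*d) * (r:ℝ)^((d+1)*d)
        ≤ (e^(k*d) * 2^(k*d) * F^d) * (ℓ:ℝ)^((d+1)*d) * (r:ℝ)^((d+1)*d) := by
          rw [← step2]
          apply mul_le_mul_of_nonneg_right (mul_le_mul_of_nonneg_right step1 (by positivity)) (by positivity)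
      _ ≤ (e^(k*d) * e^(k*d) * F^d) * (ℓ:ℝ)^((d+1)*d) * (r:ℝ)^((d+1)*d) := by
          gcongr
      _ ≤ (e^(2*(k*(d+1))) * F^d) * (ℓ:ℝ)^(k*(d+1)) * (r:ℝ)^((d+1)*d) := by
          apply mul_le_mul_of_nonneg_right _ (by positivity)
          exact mul_le_mul (by
            calc e^(k*d) * e^(k*d) * F^d ≤ e^(2*(k*(d+1))) * F^d :=
              mul_le_mul_of_nonneg_right step4 (by positivity)) step5 (by positivity) (by positivity)
      _ = e^(2*(k*(d+1))) * (ℓ:ℝ)^(k*(d+1)) * (r:ℝ)^(d*(d+1)) * F^d := by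
          rw [Nat.mul_comm (d+1) d]; ring
  exact absurd (lt_of_lt_of_le hstar hcounter) (lt_irrefl _)



-- rank from independent columns
private lemma rank_ge_of_indep {k n r : ℕ} (M : Matrix (Fin k) (Fin n) ℝ)
    (T : Finset (Fin n)) (hcard : T.card = r)
    (hLI : LinearIndependent ℝ (fun j : {x // x ∈ T} => fun i => M i j.1)) :
    r ≤ (M.submatrix id (fun j : {x // x ∈ T} => j.1)).rank := by
  rw [Matrix.rank_eq_finrank_span_cols]
  have h := finrank_span_eq_card (R := ℝ) hLI
  have : Set.range (M.submatrix id (fun j : {x // x ∈ T} => j.1)).col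
      = Set.range (fun j : {x // x ∈ T} => fun i => M i j.1) := rfl
  rw [this, h, Fintype.card_coe, hcard]

theorem stmt_14 (k n r ℓ : ℕ) (hr2 : 2 ≤ r) (hℓ2 : 2 ≤ ℓ) (hrk : r ≤ k)
    (M : Matrix (Fin k) (Fin n) ℝ)
    (hminors : ((n : ℝ) / k) ^ k ≤
      (Set.ncard {s : {s : Finset (Fin n) // s.card = k} |
        (M.submatrix id (fun j : Fin k => (s.1.orderIsoOfFin s.2 j : Fin n))).det ≠ 0} : ℝ))
    (hcond : ((Real.exp 1) ^ 2 * ℓ) ^ k < ((n : ℝ) / r) ^ (k - r)) :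
    ∃ C : Fin ℓ → Finset (Fin n),
      (Pairwise fun i j => Disjoint (C i) (C j)) ∧
      ∀ i, r ≤ (M.submatrix id (fun j : {x // x ∈ C i} => j.1)).rank := by
  classical
  -- r < k
  have hrk' : r < k := by
    rcases lt_or_eq_of_le hrk with h | h
    · exact h
    · exfalso
      have h2e : (2:ℝ) ≤ Real.exp 1 := by nlinarith [Real.add_one_le_exp (1:ℝ)]
      have hℓ1 : (2:ℝ) ≤ (ℓ:ℝ) := by exact_mod_cast hℓ2
      have hone : (1:ℝ) ≤ (Real.exp 1 ^ 2 * ℓ) ^ k := by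
        calc (1:ℝ) = 1^k := (one_pow k).symm
          _ ≤ (Real.exp 1 ^ 2 * ℓ) ^ k := by
            apply pow_le_pow_left₀ (by norm_num) (by nlinarith)
      have hz : k - r = 0 := by omega
      rw [hz, pow_zero] at hcond
      linarith
  -- columns
  set col : Fin n → (Fin k → ℝ) := fun j i => M i j with hcol
  -- independence of the columns of any nonsingular-minor set
  have hindep : ∀ (s : Finset (Fin n)) (hs : s.card = k),
      (M.submatrix id (fun j : Fin k => (s.orderIsoOfFin hs j : Fin n))).det ≠ 0 →
      LinearIndependent ℝ (fun j : {x // x ∈ s} => col j.1) := by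
    intro s hs hdet
    set A := M.submatrix id (fun j : Fin k => (s.orderIsoOfFin hs j : Fin n)) with hA
    have hu : IsUnit A := by
      rw [Matrix.isUnit_iff_isUnit_det, isUnit_iff_ne_zero]; exact hdet
    have hcols : LinearIndependent ℝ (fun j : Fin k => Aᵀ j) :=
      Matrix.linearIndependent_cols_iff_isUnit.mpr hu
    have h2 : LinearIndependent ℝ ((fun j : {x // x ∈ s} => col j.1) ∘ (s.orderIsoOfFin hs).toEquiv) :=
      hcols
    exact (linearIndependent_equiv (s.orderIsoOfFin hs).toEquiv).mp h2
  -- restriction of independence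
  have hrestrict : ∀ (T S : Finset (Fin n)), T ⊆ S →
      LinearIndependent ℝ (fun j : {x // x ∈ S} => col j.1) →
      LinearIndependent ℝ (fun j : {x // x ∈ T} => col j.1) := by
    intro T S hTS h
    exact h.comp (fun x : {x // x ∈ T} => (⟨x.1, hTS x.2⟩ : {x // x ∈ S}))
      (fun a b hab => Subtype.ext (by simpa using congrArg Subtype.val hab))
  -- packings
  set pack : ℕ → Prop := fun m => ∃ C : Fin m → Finset (Fin n),
    (Pairwise fun i j => Disjoint (C i) (C j)) ∧
    ∀ i, (C i).card = r ∧ LinearIndependent ℝ (fun j : {x // x ∈ C i} => col j.1) with hpackdef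
  have pack0 : pack 0 := ⟨Fin.elim0, fun i => i.elim0, fun i => i.elim0⟩
  set m₀ := Nat.findGreatest pack ℓ with hm₀def
  have hm₀le : m₀ ≤ ℓ := Nat.findGreatest_le ℓ
  have hm₀pack : pack m₀ := Nat.findGreatest_spec (Nat.zero_le ℓ) pack0
  obtain ⟨C, hCdisj, hCgood⟩ := hm₀pack
  by_cases hcase : m₀ = ℓ
  · refine ⟨C ∘ Fin.cast hcase.symm, ?_, ?_⟩
    · intro i j hij
      exact hCdisj (fun h => hij (by
        have := congrArg (Fin.cast hcase) h
        simpa using this))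
    · intro i
      exact rank_ge_of_indep M _ (hCgood _).1 (hCgood _).2
  · exfalso
    have hm₀lt : m₀ < ℓ := lt_of_le_of_ne hm₀le hcase
    have hnot : ¬ pack (m₀+1) := Nat.findGreatest_is_greatest (P := pack) (n := ℓ) (by omega) (by omega)
    set P : Finset (Fin n) := Finset.univ.biUnion C with hPdef
    have hPcard : P.card ≤ m₀ * r := by
      calc P.card ≤ ∑ i : Fin m₀, (C i).card := Finset.card_biUnion_le
        _ = ∑ _i : Fin m₀, r := by
            apply Finset.sum_congr rfl; intro i _; exact (hCgood i).1
        _ = m₀ * r := by simp [Finset.sum_const, Nat.smul_one_eq_cast]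
    have hCP : ∀ i, C i ⊆ P := fun i => Finset.subset_biUnion_of_mem C (Finset.mem_univ i)
    -- extension impossible
    have hext : ∀ T : Finset (Fin n), T.card = r →
        LinearIndependent ℝ (fun j : {x // x ∈ T} => col j.1) → Disjoint T P → False := by
      intro T hTcard hTLI hTP
      apply hnot
      refine ⟨Fin.cons T C, ?_, ?_⟩
      · intro i j hij
        induction i using Fin.cases with
        | zero =>
          induction j using Fin.cases with
          | zero => exact absurd rfl hij
          | succ j => simpa using hTP.mono_right (hCP j)
        | succ i =>
          induction j using Fin.cases with
          | zero => simpa using (hTP.mono_right (hCP i)).symm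
          | succ j =>
            simp only [Fin.cons_succ]
            exact hCdisj (fun h => hij (congrArg Fin.succ h))
      · intro i
        induction i using Fin.cases with
        | zero => exact ⟨hTcard, hTLI⟩
        | succ i => exact hCgood i
    set d := k - r with hddef
    have hkd : k = r + d := by omega
    -- every nonsingular set has few elements outside P
    have hfew : ∀ (s : Finset (Fin n)) (hs : s.card = k),
        (M.submatrix id (fun j : Fin k => (s.orderIsoOfFin hs j : Fin n))).det ≠ 0 →
        (s \ P).card ≤ r - 1 := by
      intro s hs hdet
      by_contra hbig
      have hge : r ≤ (s \ P).card := by omega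
      obtain ⟨T, hTsub, hTcard⟩ := Finset.exists_subset_card_eq hge
      have hTs : T ⊆ s := hTsub.trans Finset.sdiff_subset
      have hTLI := hrestrict T s hTs (hindep s hs hdet)
      have hTP : Disjoint T P := Finset.sdiff_disjoint.mono_left hTsub
      exact hext T hTcard hTLI hTP
    -- counting
    set p : {s : Finset (Fin n) // s.card = k} → Prop := fun s =>
      (M.submatrix id (fun j : Fin k => (s.1.orderIsoOfFin s.2 j : Fin n))).det ≠ 0 with hpdef
    set N := (Finset.univ.filter p).card with hNdef
    have hminors' : ((n : ℝ) / k) ^ k ≤ (N : ℝ) := by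
      have hN : {s : {s : Finset (Fin n) // s.card = k} | p s}.ncard = N := by
        rw [Set.ncard_eq_toFinset_card']
        simp [Set.toFinset_setOf, hNdef]
      rw [← hN]
      exact hminors
    -- the injection
    set Q : {s : Finset (Fin n) // s.card = k} → Finset (Fin n) := fun s =>
      (((s.1 ∩ P).sort (· ≤ ·)).take (d+1)).toFinset with hQdef
    have hQsubinter : ∀ s, Q s ⊆ s.1 ∩ P := by
      intro s x hx
      rw [hQdef, List.mem_toFinset] at hx
      exact (Finset.mem_sort (α := Fin n) (· ≤ ·)).mp (List.take_subset _ _ hx)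
    have hQcard : ∀ s, p s → (Q s).card = d + 1 := by
      intro s hps
      have hinter : d + 1 ≤ (s.1 ∩ P).card := by
        have h1 := Finset.card_inter_add_card_sdiff s.1 P
        have h2 := hfew s.1 s.2 hps
        have h3 := s.2
        omega
      have hlen : d + 1 ≤ ((s.1 ∩ P).sort (· ≤ ·)).length := by
        rw [Finset.length_sort]; exact hinter
      have hnd : (((s.1 ∩ P).sort (· ≤ ·)).take (d+1)).Nodup :=
        (List.take_sublist _ _).nodup (Finset.sort_nodup _ _)
      rw [hQdef]
      rw [List.toFinset_card_of_nodup hnd, List.length_take]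
      omega
    have hQsub : ∀ s, Q s ⊆ s.1 := fun s =>
      (hQsubinter s).trans Finset.inter_subset_left
    set TT : Finset (Finset (Fin n) × Finset (Fin n)) :=
      (P.powersetCard (d+1)) ×ˢ ((Finset.univ : Finset (Fin n)).powersetCard (r-1)) with hTTdef
    have hmaps : ∀ s ∈ Finset.univ.filter p, (Q s, s.1 \ Q s) ∈ TT := by
      intro s hs
      rw [Finset.mem_filter] at hs
      have hps := hs.2
      rw [hTTdef, Finset.mem_product]
      constructor
      · rw [Finset.mem_powersetCard]
        exact ⟨(hQsubinter s).trans Finset.inter_subset_right, hQcard s hps⟩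
      · rw [Finset.mem_powersetCard]
        refine ⟨Finset.subset_univ _, ?_⟩
        rw [Finset.card_sdiff_of_subset (hQsub s), hQcard s hps, s.2]
        omega
    have hinj : ∀ s₁ ∈ Finset.univ.filter p, ∀ s₂ ∈ Finset.univ.filter p,
        (Q s₁, s₁.1 \ Q s₁) = (Q s₂, s₂.1 \ Q s₂) → s₁ = s₂ := by
      intro s₁ _ s₂ _ heq
      rw [Prod.mk.injEq] at heq
      apply Subtype.ext
      calc s₁.1 = Q s₁ ∪ (s₁.1 \ Q s₁) := (Finset.union_sdiff_of_subset (hQsub s₁)).symm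
        _ = Q s₂ ∪ (s₂.1 \ Q s₂) := by rw [heq.2, heq.1]
        _ = s₂.1 := Finset.union_sdiff_of_subset (hQsub s₂)
    have hcardle : N ≤ P.card.choose (d+1) * n.choose (r-1) := by
      have := Finset.card_le_card_of_injOn (fun s => (Q s, s.1 \ Q s)) hmaps hinj
      rw [hTTdef] at this
      rw [Finset.card_product, Finset.card_powersetCard, Finset.card_powersetCard,
        Finset.card_univ, Fintype.card_fin] at this
      exact this
    have hcardle2 : N ≤ (ℓ*r).choose (d+1) * n.choose (r-1) := by
      apply hcardle.trans
      apply Nat.mul_le_mul_right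
      apply Nat.choose_le_choose
      calc P.card ≤ m₀ * r := hPcard
        _ ≤ ℓ * r := Nat.mul_le_mul_right r (le_of_lt hm₀lt)
    have hbound : ((n : ℝ) / k) ^ k ≤ ((ℓ*r).choose (k - r + 1) : ℝ) * (n.choose (r-1) : ℝ) := by
      apply hminors'.trans
      have : ((N : ℕ) : ℝ) ≤ (((ℓ*r).choose (d+1) * n.choose (r-1) : ℕ) : ℝ) := by
        exact_mod_cast hcardle2
      rw [Nat.cast_mul] at this
      exact this
    exact key_ineq k n r ℓ hr2 hℓ2 hrk' hcond hbound
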